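/- Define c₀(δ) = 0 and c_l(δ) = (1 + δ·Σ_{m=0}^{l-1} c_m²) / √(1 - δ²·Σ_{m=0}^{l-1} c_m²) for l ≥ 1. Then for all l in the range where s_l(δ) < 1, one has δ²·Σ_{m=0}^{l} c_m(δ)² = s_l(δ), where s_l(δ) is defined by s₀ = 0 and s_{l+1} = s_l + (δ+s_l)²/(1-s_l). In particular the denominators are nonzero and the c_l are well-defined. -/

import Mathlib

open Real Finset

/-- `φ_δ(s) = (δ+s)²/(1-s)`. -/
noncomputable def phiDelta (δ s : ℝ) : ℝ := (δ + s) ^ 2 / (1 - s)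

/-- The recursively defined sequence `s₀ = 0`, `s_{l+1} = s_l + φ_δ(s_l)`. -/
noncomputable def sSeq (δ : ℝ) : ℕ → ℝ
  | 0 => 0
  | l + 1 => sSeq δ l + phiDelta δ (sSeq δ l)

/-- Auxiliary sequence computing the pair `(c_l, Σ_{m=0}^{l} c_m²)`. -/
noncomputable def cAux (δ : ℝ) : ℕ → ℝ × ℝ
  | 0 => (0, 0)
  | l + 1 =>
    let S := (cAux δ l).2
    let c := (1 + δ * S) / Real.sqrt (1 - δ ^ 2 * S)
    (c, S + c ^ 2)

/-- The sequence `c₀ = 0`, `c_l = (1 + δ Σ_{m<l} c_m²)/√(1 - δ² Σ_{m<l} c_m²)`. -/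
noncomputable def cSeq (δ : ℝ) (l : ℕ) : ℝ := (cAux δ l).1

theorem cSeq_sum_eq_sSeq (δ : ℝ) (hδ : 0 < δ) (l : ℕ)
    (hs : ∀ m ≤ l, sSeq δ m < 1) :
    δ ^ 2 * ∑ m ∈ Finset.range (l + 1), cSeq δ m ^ 2 = sSeq δ l ∧
      ∀ m ≤ l, 0 < 1 - δ ^ 2 * ∑ k ∈ Finset.range m, cSeq δ k ^ 2 := by
  have hsum : ∀ n : ℕ, ∑ m ∈ Finset.range (n + 1), cSeq δ m ^ 2 = (cAux δ n).2 := by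
    intro n
    induction n with
    | zero => simp [cSeq, cAux]
    | succ k ih =>
      rw [Finset.sum_range_succ, ih]
      simp [cSeq, cAux]
  have key : ∀ n : ℕ, (∀ m ≤ n, sSeq δ m < 1) → δ ^ 2 * (cAux δ n).2 = sSeq δ n := by
    intro n
    induction n with
    | zero => simp [cAux, sSeq]
    | succ k ih =>
      intro h
      have hk : δ ^ 2 * (cAux δ k).2 = sSeq δ k :=
        ih fun m hm => h m (hm.trans k.le_succ)
      have hsk : sSeq δ k < 1 := h k k.le_succ
      have hpos : 0 < 1 - δ ^ 2 * (cAux δ k).2 := by rw [hk]; linarith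
      show δ ^ 2 * ((cAux δ k).2 + _ ^ 2) = sSeq δ k + phiDelta δ (sSeq δ k)
      have hsq : Real.sqrt (1 - δ ^ 2 * (cAux δ k).2) ^ 2 = 1 - δ ^ 2 * (cAux δ k).2 :=
        Real.sq_sqrt hpos.le
      rw [div_pow, hsq]
      rw [mul_add, hk, phiDelta, ← hk]
      have hne : 1 - δ ^ 2 * (cAux δ k).2 ≠ 0 := ne_of_gt hpos
      field_simp
  constructor
  · rw [hsum]
    exact key l hs
  · intro m hm
    cases m with
    | zero => simp
    | succ k =>
      have hk : δ ^ 2 * (cAux δ k).2 = sSeq δ k :=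
        key k fun j hj => hs j (hj.trans (Nat.le_of_succ_le hm))
      have : ∑ j ∈ Finset.range (k + 1), cSeq δ j ^ 2 = (cAux δ k).2 := hsum k
      rw [this, hk]
      have := hs k (Nat.le_of_succ_le hm)
      linarith
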